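/- Work in 𝒷ℰ(B_n) with Θ_j := Θ_j^{B_n}(1,1). (a) Fix 1 ≤ i ≤ n − 1 and suppose Δ : 𝒷ℰ(B_n) → 𝒷ℰ(B_n) is a ℚ-linear map satisfying the twisted Leibniz rule Δ(uv) = Δ(u)v + s_i(u)Δ(v) for all u, v, with Δ([i,i+1]) = 1 and Δ vanishing on every other generator ([k,l] for {k,l} ≠ {i,i+1}, all \overline{[k,l]}, and all [k]). Then Q := h_{i,i+1}^{-1} ∘ Δ satisfies Q(Θ_i) = Θ_{i+1}, Q(Θ_{i+1}) = −Θ_{i+1}, and Q(Θ_j) = 0 for j ≠ i, i+1. (b) Suppose Δ_n : 𝒷ℰ(B_n) → 𝒷ℰ(B_n) is a ℚ-linear map with Δ_n(uv) = Δ_n(u)v + s_n(u)Δ_n(v), Δ_n([n]) = 1, and Δ_n vanishing on all other generators. Then Q_n := h_n^{-1} ∘ Δ_n satisfies Q_n(Θ_n) = 1 + Θ_n^{-1} and Q_n(Θ_j) = 0 for j ≠ n. -/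

import Mathlib

namespace Stmt16

/-- `i` is in the index range `{1, …, n}`. -/
def inR (n i : ℕ) : Prop := 1 ≤ i ∧ i ≤ n

/-- The defining relations (0)–(6) of the algebra `𝒷ℰ(B_n)` for elements
`a i j = [i,j]`, `b i j = \overline{[i,j]}` (`1 ≤ i ≠ j ≤ n`) and `c i = [i]`
(`1 ≤ i ≤ n`) of an associative unital ring `A`. -/
structure BEBnRels (n : ℕ) {A : Type*} [Ring A]
    (a b : ℕ → ℕ → A) (c : ℕ → A) : Prop where
  r0a : ∀ i j, inR n i → inR n j → i ≠ j → a i j = -a j i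
  r0b : ∀ i j, inR n i → inR n j → i ≠ j → b i j = b j i
  r1a : ∀ i j, inR n i → inR n j → i ≠ j → a i j * a i j = 0
  r1b : ∀ i j, inR n i → inR n j → i ≠ j → b i j * b i j = 0
  r1c : ∀ i, inR n i → c i * c i = 0
  r2aa : ∀ i j k l, inR n i → inR n j → inR n k → inR n l →
      i ≠ j → k ≠ l → i ≠ k → i ≠ l → j ≠ k → j ≠ l →
      a i j * a k l = a k l * a i j
  r2ba : ∀ i j k l, inR n i → inR n j → inR n k → inR n l →
      i ≠ j → k ≠ l → i ≠ k → i ≠ l → j ≠ k → j ≠ l →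
      b i j * a k l = a k l * b i j
  r2bb : ∀ i j k l, inR n i → inR n j → inR n k → inR n l →
      i ≠ j → k ≠ l → i ≠ k → i ≠ l → j ≠ k → j ≠ l →
      b i j * b k l = b k l * b i j
  r3cc : ∀ i j, inR n i → inR n j → c i * c j = c j * c i
  r3ab : ∀ i j, inR n i → inR n j → i ≠ j → a i j * b i j = b i j * a i j
  r3ac : ∀ i j k, inR n i → inR n j → inR n k → i ≠ j → k ≠ i → k ≠ j →
      a i j * c k = c k * a i j
  r3bc : ∀ i j k, inR n i → inR n j → inR n k → i ≠ j → k ≠ i → k ≠ j →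
      b i j * c k = c k * b i j
  r4a : ∀ i j k, inR n i → inR n j → inR n k → i ≠ j → j ≠ k → i ≠ k →
      a i j * a j k + a j k * a k i + a k i * a i j = 0
  r4b : ∀ i j k, inR n i → inR n j → inR n k → i ≠ j → j ≠ k → i ≠ k →
      b i k * a i j + a j i * b j k + b k j * b i k = 0
  r4c : ∀ i j, inR n i → inR n j → i ≠ j →
      a i j * c i + c j * a j i + c i * b i j + b i j * c j = 0
  r5 : ∀ i j, 1 ≤ i → i < j → j ≤ n →
      a i j * c i * b i j * c i + b i j * c i * a i j * c i +
        c i * a i j * c i * b i j + c i * b i j * c i * a i j = 0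
  r6 : ∀ i j, 1 ≤ i → i < j → j ≤ n →
      a i j * c i * b i j * c j = c j * b i j * c i * a i j

/-- The RSM-element `Θ_j := Θ_j^{B_n}(1,1)` in `𝒷ℰ(B_n)`:
`Θ_j = (h_{j-1,j}⁻¹ ⋯ h_{1,j}⁻¹) · h_j · (∏_{i ≠ j} g_{ij}, increasing i) · h_j ·
(h_{j,n} ⋯ h_{j,j+1})`, where `h_{ij} = 1 + [i,j]`, `g_{ij} = 1 + \overline{[i,j]}`,
`h_j = 1 + [j]`, and `h_{ij}⁻¹ = h_{ji} = 1 + [j,i]`. -/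
def ThetaB1 (n : ℕ) {A : Type*} [Ring A] (a b : ℕ → ℕ → A) (c : ℕ → A) (j : ℕ) : A :=
  ((List.range' 1 (j - 1)).reverse.map fun i => 1 + a j i).prod *
    (1 + c j) *
    (((List.range' 1 n).filter fun i => decide (i ≠ j)).map fun i => 1 + b i j).prod *
    (1 + c j) *
    ((List.range' (j + 1) (n - j)).reverse.map fun k => 1 + a j k).prod

/-- The transposition `σ_i = (i, i+1)` acting on indices. -/
def sigma (i k : ℕ) : ℕ := if k = i then i + 1 else if k = i + 1 then i else k

set_option linter.unusedSectionVars false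
set_option maxHeartbeats 1000000

section Helpers2

variable {A : Type*} [Ring A] [Algebra ℚ A]

private lemma delta_one (s : A ≃ₐ[ℚ] A) (Δ : A →ₗ[ℚ] A)
    (hL : ∀ u v : A, Δ (u * v) = Δ u * v + s u * Δ v) : Δ (1 : A) = 0 := by
  have h := hL 1 1
  simp only [mul_one, map_one, one_mul] at h
  have h2 : Δ (1 : A) + 0 = Δ (1 : A) + Δ (1 : A) := by rw [add_zero]; exact h
  exact (add_left_cancel h2).symm

private lemma delta_mul_zero (s : A ≃ₐ[ℚ] A) (Δ : A →ₗ[ℚ] A)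
    (hL : ∀ u v : A, Δ (u * v) = Δ u * v + s u * Δ v) {u v : A}
    (hu : Δ u = 0) (hv : Δ v = 0) : Δ (u * v) = 0 := by
  rw [hL, hu, hv, zero_mul, mul_zero, add_zero]

private lemma delta_prod (s : A ≃ₐ[ℚ] A) (Δ : A →ₗ[ℚ] A)
    (hL : ∀ u v : A, Δ (u * v) = Δ u * v + s u * Δ v)
    (L : List ℕ) (f : ℕ → A) (h : ∀ x ∈ L, Δ (f x) = 0) :
    Δ (L.map f).prod = 0 := by
  induction L with
  | nil => simpa using delta_one s Δ hL
  | cons x L ih =>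
    rw [List.map_cons, List.prod_cons]
    exact delta_mul_zero s Δ hL (h x (by simp)) (ih fun k hk => h k (by simp [hk]))

private lemma s_map_prod (s : A ≃ₐ[ℚ] A) (L : List ℕ) (f f' : ℕ → A)
    (h : ∀ x ∈ L, s (f x) = f' x) : s (L.map f).prod = (L.map f').prod := by
  rw [map_list_prod, List.map_map]
  congr 1
  exact List.map_congr_left h

private lemma revprod_mul_prod (L : List ℕ) (g h : ℕ → A)
    (hgh : ∀ k ∈ L, h k * g k = 1) :
    (L.reverse.map h).prod * (L.map g).prod = 1 := by
  induction L with
  | nil => simp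
  | cons x L ih =>
    have h1 : h x * g x = 1 := hgh x (by simp)
    have ih' := ih fun k hk => hgh k (by simp [hk])
    simp only [List.reverse_cons, List.map_append, List.map_cons, List.map_nil,
      List.prod_append, List.prod_cons, List.prod_nil, mul_one]
    rw [mul_assoc, ← mul_assoc (h x), h1, one_mul, ih']

private lemma prod_mul_revprod (L : List ℕ) (g h : ℕ → A)
    (hgh : ∀ k ∈ L, g k * h k = 1) :
    (L.map g).prod * (L.reverse.map h).prod = 1 := by
  induction L with
  | nil => simp
  | cons x L ih =>
    have h1 : g x * h x = 1 := hgh x (by simp)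
    have ih' := ih fun k hk => hgh k (by simp [hk])
    simp only [List.reverse_cons, List.map_append, List.map_cons, List.map_nil,
      List.prod_append, List.prod_cons, List.prod_nil, mul_one]
    rw [mul_assoc, ← mul_assoc (List.map g L).prod, ih', one_mul, h1]

private lemma one_sub_mul_one_add (x : A) (h : x * x = 0) : (1 - x) * (1 + x) = 1 := by
  have e : (1 - x) * (1 + x) = 1 - x * x := by noncomm_ring
  rw [e, h, sub_zero]

private lemma one_add_mul_one_sub (x : A) (h : x * x = 0) : (1 + x) * (1 - x) = 1 := by
  have e : (1 + x) * (1 - x) = 1 - x * x := by noncomm_ring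
  rw [e, h, sub_zero]

private lemma sigma_self (i : ℕ) : sigma i i = i + 1 := by
  unfold sigma; rw [if_pos rfl]

private lemma sigma_succ (i : ℕ) : sigma i (i + 1) = i := by
  unfold sigma; rw [if_neg (by omega), if_pos rfl]

private lemma sigma_other (i k : ℕ) (h1 : k ≠ i) (h2 : k ≠ i + 1) : sigma i k = k := by
  unfold sigma; rw [if_neg h1, if_neg h2]

private lemma range'_split (n i : ℕ) (h1 : 1 ≤ i) (h2 : i + 1 ≤ n) :
    List.range' 1 n = List.range' 1 (i-1) ++ i :: (i+1) :: List.range' (i+1+1) (n-i-1) := by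
  have e1 : List.range' i (n-i+1) = i :: (i+1) :: List.range' (i+1+1) (n-i-1) := by
    rw [show n-i+1 = (n-i-1)+1+1 from by omega, List.range'_succ, List.range'_succ]
  have e2 := List.range'_append (s := 1) (m := i-1) (n := n-i+1) (step := 1)
  simp only [one_mul] at e2
  rw [show 1+(i-1) = i from by omega, e1, show i-1+(n-i+1) = n from by omega] at e2
  exact e2.symm

private lemma middle_prod (n i : ℕ) (h1 : 1 ≤ i) (h2 : i + 1 ≤ n) (F : ℕ → A) :
    (((List.range' 1 n).filter fun k => decide (k ≠ i)).map fun k => F (sigma i k)).prod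
      = (((List.range' 1 n).filter fun k => decide (k ≠ i+1)).map F).prod := by
  have f1 : ∀ m : ℕ, i ≤ m → (List.range' 1 (i-1)).filter (fun k => decide (k ≠ m))
      = List.range' 1 (i-1) := by
    intro m hm
    refine List.filter_eq_self.mpr ?_
    intro k hk
    rw [List.mem_range'_1] at hk
    simp only [decide_eq_true_eq]
    omega
  have f2 : ∀ m : ℕ, m ≤ i + 1 → (List.range' (i+1+1) (n-i-1)).filter (fun k => decide (k ≠ m))
      = List.range' (i+1+1) (n-i-1) := by
    intro m hm
    refine List.filter_eq_self.mpr ?_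
    intro k hk
    rw [List.mem_range'_1] at hk
    simp only [decide_eq_true_eq]
    omega
  have c1 : (i :: (i+1) :: List.range' (i+1+1) (n-i-1)).filter (fun k => decide (k ≠ i))
      = (i+1) :: List.range' (i+1+1) (n-i-1) := by
    rw [List.filter_cons_of_neg (by simp), List.filter_cons_of_pos
      (by simp only [decide_eq_true_eq]; omega), f2 i (by omega)]
  have c2 : (i :: (i+1) :: List.range' (i+1+1) (n-i-1)).filter (fun k => decide (k ≠ i+1))
      = i :: List.range' (i+1+1) (n-i-1) := by
    rw [List.filter_cons_of_pos (by simp only [decide_eq_true_eq]; omega),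
      List.filter_cons_of_neg (by simp), f2 (i+1) (by omega)]
  rw [range'_split n i h1 h2, List.filter_append, List.filter_append,
    f1 i (le_refl i), f1 (i+1) (by omega), c1, c2,
    List.map_append, List.map_append, List.prod_append, List.prod_append,
    List.map_cons, List.map_cons, List.prod_cons, List.prod_cons]
  have g1 : (List.range' 1 (i-1)).map (fun k => F (sigma i k))
      = (List.range' 1 (i-1)).map F := by
    apply List.map_congr_left
    intro k hk
    rw [List.mem_range'_1] at hk
    rw [sigma_other i k (by omega) (by omega)]
  have g2 : (List.range' (i+1+1) (n-i-1)).map (fun k => F (sigma i k))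
      = (List.range' (i+1+1) (n-i-1)).map F := by
    apply List.map_congr_left
    intro k hk
    rw [List.mem_range'_1] at hk
    rw [sigma_other i k (by omega) (by omega)]
  rw [g1, g2, sigma_succ i]



private lemma parta_core (s : A ≃ₐ[ℚ] A) (Δ : A →ₗ[ℚ] A)
    (hL : ∀ u v : A, Δ (u * v) = Δ u * v + s u * Δ v)
    (P u t Θi Θi1 : A)
    (hTi : Θi = P * u) (hΔP : Δ P = 0) (hΔu : Δ u = 1)
    (hTi1 : Θi1 = t * s P) (hΔt : Δ t = -1) (hΔsP : Δ (s P) = 0) :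
    t * Δ Θi = Θi1 ∧ t * Δ Θi1 = -Θi1 := by
  have h1 : Δ Θi = s P := by rw [hTi, hL, hΔP, zero_mul, zero_add, hΔu, mul_one]
  have h2 : Δ Θi1 = -(s P) := by
    rw [hTi1, hL, hΔt, hΔsP, mul_zero, add_zero, neg_one_mul]
  exact ⟨by rw [h1, hTi1], by rw [h2, hTi1, mul_neg]⟩

private lemma partb_core (sn : A ≃ₐ[ℚ] A) (Δn : A →ₗ[ℚ] A)
    (hL : ∀ u v : A, Δn (u * v) = Δn u * v + sn u * Δn v)
    (P1 B B' C e : A)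
    (hP : Δn P1 = 0) (hBz : Δn B = 0) (he : Δn e = 1)
    (hsP : sn P1 = B') (hsB : sn B = C) (hse : sn e = -e)
    (h1 : B' * B = 1) (h2 : B * B' = 1) (h3 : P1 * C = 1)
    (hee : e * e = 0) (U : Aˣ) (hU : (U : A) = P1 * (1 + e) * B * (1 + e)) :
    (1 - e) * Δn (P1 * (1 + e) * B * (1 + e)) = 1 + ((U⁻¹ : Aˣ) : A) := by
  have hΔone : Δn (1 : A) = 0 := by
    have h := hL 1 1
    simp only [mul_one, map_one, one_mul] at h
    have h2' : Δn (1 : A) + 0 = Δn (1 : A) + Δn (1 : A) := by rw [add_zero]; exact h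
    exact (add_left_cancel h2').symm
  have h5 : (1 + e) * (1 - e) = 1 := by
    have e' : (1 + e) * (1 - e) = 1 - e * e := by noncomm_ring
    rw [e', hee, sub_zero]
  have h6 : (1 - e) * (1 + e) = 1 := by
    have e' : (1 - e) * (1 + e) = 1 - e * e := by noncomm_ring
    rw [e', hee, sub_zero]
  have hΔ1e : Δn (1 + e) = 1 := by rw [map_add, hΔone, zero_add, he]
  have hs1e : sn (1 + e) = 1 - e := by rw [map_add, map_one, hse, ← sub_eq_add_neg]
  have step1 : Δn (P1 * (1 + e)) = B' := by
    rw [hL, hP, zero_mul, zero_add, hΔ1e, mul_one, hsP]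
  have step2 : Δn (P1 * (1 + e) * B) = B' * B := by
    rw [hL, step1, hBz, mul_zero, add_zero]
  have step3 : Δn (P1 * (1 + e) * B * (1 + e)) = B' * B * (1 + e) + B' * (1 - e) * C := by
    rw [hL, step2, hΔ1e, mul_one, map_mul, map_mul, hsP, hsB, hs1e]
  have c1 : ∀ x : A, (1 + e) * ((1 - e) * x) = x := fun x => by
    rw [← mul_assoc, h5, one_mul]
  have c2 : ∀ x : A, B * (B' * x) = x := fun x => by rw [← mul_assoc, h2, one_mul]
  have key : (P1 * (1 + e) * B * (1 + e)) * ((1 - e) * (B' * (1 - e) * C)) = 1 := by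
    calc (P1 * (1 + e) * B * (1 + e)) * ((1 - e) * (B' * (1 - e) * C))
        = P1 * ((1 + e) * (B * ((1 + e) * ((1 - e) * (B' * ((1 - e) * C)))))) := by
          simp only [mul_assoc]
      _ = P1 * ((1 + e) * (B * (B' * ((1 - e) * C)))) := by rw [c1]
      _ = P1 * ((1 + e) * ((1 - e) * C)) := by rw [c2]
      _ = P1 * C := by rw [c1]
      _ = 1 := h3
  have hUinv : ((U⁻¹ : Aˣ) : A) = (1 - e) * (B' * (1 - e) * C) :=
    Units.inv_eq_of_mul_eq_one_right (by rw [hU]; exact key)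
  rw [step3, mul_add, h1, one_mul, h6, hUinv]


end Helpers2

section ThetaLemmas
variable {A : Type*} [Ring A] [Algebra ℚ A]

private lemma delta_theta_zero (n : ℕ) (a b : ℕ → ℕ → A) (c : ℕ → A) (j : ℕ)
    (s : A ≃ₐ[ℚ] A) (Δ : A →ₗ[ℚ] A)
    (hL : ∀ u v : A, Δ (u * v) = Δ u * v + s u * Δ v)
    (hA : ∀ k, 1 ≤ k → k ≤ n → k ≠ j → Δ (a j k) = 0)
    (hB : ∀ k, 1 ≤ k → k ≤ n → k ≠ j → Δ (b k j) = 0)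
    (hC : Δ (c j) = 0) (hj1 : 1 ≤ j) (hjn : j ≤ n) :
    Δ (ThetaB1 n a b c j) = 0 := by
  have h1 : Δ (1 + c j : A) = 0 := by
    rw [map_add, delta_one s Δ hL, hC, add_zero]
  unfold ThetaB1
  refine delta_mul_zero s Δ hL (delta_mul_zero s Δ hL (delta_mul_zero s Δ hL
    (delta_mul_zero s Δ hL ?_ h1) ?_) h1) ?_
  · apply delta_prod s Δ hL
    intro k hk
    rw [List.mem_reverse, List.mem_range'_1] at hk
    obtain ⟨hk1, hk2⟩ := hk
    rw [map_add, delta_one s Δ hL, hA k (by omega) (by omega) (by omega), add_zero]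
  · apply delta_prod s Δ hL
    intro k hk
    rw [List.mem_filter, List.mem_range'_1] at hk
    obtain ⟨⟨hk1, hk2⟩, hk3⟩ := hk
    have hkj : k ≠ j := by simpa using hk3
    rw [map_add, delta_one s Δ hL, hB k (by omega) (by omega) hkj, add_zero]
  · apply delta_prod s Δ hL
    intro k hk
    rw [List.mem_reverse, List.mem_range'_1] at hk
    obtain ⟨hk1, hk2⟩ := hk
    rw [map_add, delta_one s Δ hL, hA k (by omega) (by omega) (by omega), add_zero]

end ThetaLemmas


/-- in `𝒷ℰ(B_n)`, with `Θ_j := Θ_j^{B_n}(1,1)`: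
(a) for `1 ≤ i ≤ n-1`, if `Δ` is a `ℚ`-linear map with the twisted Leibniz rule
`Δ(uv) = Δ(u)v + s_i(u)Δ(v)`, `Δ([i,i+1]) = 1`, and `Δ` vanishing on every other
generator, then `Q = h_{i,i+1}⁻¹ ∘ Δ` satisfies `Q(Θ_i) = Θ_{i+1}`,
`Q(Θ_{i+1}) = -Θ_{i+1}`, `Q(Θ_j) = 0` for `j ≠ i, i+1`;
(b) if `Δ_n` is a `ℚ`-linear map with `Δ_n(uv) = Δ_n(u)v + s_n(u)Δ_n(v)`,
`Δ_n([n]) = 1`, vanishing on the other generators, then `Q_n = h_n⁻¹ ∘ Δ_n` satisfies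
`Q_n(Θ_n) = 1 + Θ_n⁻¹` and `Q_n(Θ_j) = 0` for `j ≠ n`. -/
theorem twisted_derivations_on_RSM_elements (n : ℕ) (hn : 2 ≤ n)
    (A : Type*) [Ring A] [Algebra ℚ A]
    (a b : ℕ → ℕ → A) (c : ℕ → A) (rels : BEBnRels n a b c) :
    ((∀ i, 1 ≤ i → i + 1 ≤ n → ∀ (s : A ≃ₐ[ℚ] A) (Δ : A →ₗ[ℚ] A),
      (∀ k l, inR n k → inR n l → k ≠ l → s (a k l) = a (sigma i k) (sigma i l)) →
      (∀ k l, inR n k → inR n l → k ≠ l → s (b k l) = b (sigma i k) (sigma i l)) →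
      (∀ k, inR n k → s (c k) = c (sigma i k)) →
      (∀ u v : A, Δ (u * v) = Δ u * v + s u * Δ v) →
      Δ (a i (i + 1)) = 1 →
      (∀ k l, inR n k → inR n l → k ≠ l → ¬(k = i ∧ l = i + 1) → ¬(k = i + 1 ∧ l = i) →
        Δ (a k l) = 0) →
      (∀ k l, inR n k → inR n l → k ≠ l → Δ (b k l) = 0) →
      (∀ k, inR n k → Δ (c k) = 0) →
      ((1 + a (i + 1) i) * Δ (ThetaB1 n a b c i) = ThetaB1 n a b c (i + 1) ∧
       (1 + a (i + 1) i) * Δ (ThetaB1 n a b c (i + 1)) = -ThetaB1 n a b c (i + 1) ∧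
       ∀ j, inR n j → j ≠ i → j ≠ i + 1 →
         (1 + a (i + 1) i) * Δ (ThetaB1 n a b c j) = 0)) ∧
    (∀ (sn : A ≃ₐ[ℚ] A) (Δn : A →ₗ[ℚ] A) (U : Aˣ),
      (U : A) = ThetaB1 n a b c n →
      (∀ k l, inR n k → inR n l → k ≠ l → k ≠ n → l ≠ n →
        sn (a k l) = a k l ∧ sn (b k l) = b k l) →
      (∀ k, inR n k → k ≠ n →
        sn (c k) = c k ∧ sn (a k n) = b k n ∧ sn (b k n) = a k n) →
      sn (c n) = -c n →
      (∀ u v : A, Δn (u * v) = Δn u * v + sn u * Δn v) →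
      Δn (c n) = 1 →
      (∀ k l, inR n k → inR n l → k ≠ l → Δn (a k l) = 0 ∧ Δn (b k l) = 0) →
      (∀ k, inR n k → k ≠ n → Δn (c k) = 0) →
      ((1 - c n) * Δn (ThetaB1 n a b c n) = 1 + ((U⁻¹ : Aˣ) : A) ∧
       ∀ j, inR n j → j ≠ n → (1 - c n) * Δn (ThetaB1 n a b c j) = 0))) := by
  constructor
  · intro i hi1 hin s Δ hsa hsb hsc hL hΔ1 hΔa hΔb hΔc
    have hiR : inR n i := ⟨hi1, by omega⟩
    have hi1R : inR n (i+1) := ⟨by omega, hin⟩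
    have hΔone := delta_one s Δ hL
    have hΔ1p : ∀ x : A, Δ (1 + x) = Δ x := fun x => by rw [map_add, hΔone, zero_add]
    have hzA : ∀ p k, inR n p → inR n k → p ≠ k → ¬(p = i ∧ k = i+1) → ¬(p = i+1 ∧ k = i) →
        Δ (1 + a p k) = 0 := fun p k h1 h2 h3 h4 h5 => by
      rw [hΔ1p, hΔa p k h1 h2 h3 h4 h5]
    have hzB : ∀ k p, inR n k → inR n p → k ≠ p → Δ (1 + b k p) = 0 := fun k p h1 h2 h3 => by
      rw [hΔ1p, hΔb k p h1 h2 h3]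
    have hzC : ∀ k, inR n k → Δ (1 + c k) = 0 := fun k h => by rw [hΔ1p, hΔc k h]
    have hTi : ThetaB1 n a b c i =
        (((List.range' 1 (i-1)).reverse.map fun k => 1 + a i k).prod * (1 + c i) *
          (((List.range' 1 n).filter fun k => decide (k ≠ i)).map fun k => 1 + b k i).prod *
          (1 + c i) *
          ((List.range' (i+1+1) (n-i-1)).reverse.map fun k => 1 + a i k).prod) *
        (1 + a i (i+1)) := by
      unfold ThetaB1
      conv_lhs => rw [show n - i = (n-i-1)+1 from by omega, List.range'_succ]
      simp only [List.reverse_cons, List.map_append, List.map_cons, List.map_nil,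
        List.prod_append, List.prod_cons, List.prod_nil, mul_one]
      rw [← mul_assoc]
    set P : A := (((List.range' 1 (i-1)).reverse.map fun k => 1 + a i k).prod * (1 + c i) *
          (((List.range' 1 n).filter fun k => decide (k ≠ i)).map fun k => 1 + b k i).prod *
          (1 + c i) *
          ((List.range' (i+1+1) (n-i-1)).reverse.map fun k => 1 + a i k).prod) with hPdef
    have hsX1 : s ((List.range' 1 (i-1)).reverse.map fun k => 1 + a i k).prod
        = ((List.range' 1 (i-1)).reverse.map fun k => 1 + a (i+1) k).prod := by
      apply s_map_prod
      intro k hk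
      rw [List.mem_reverse, List.mem_range'_1] at hk
      obtain ⟨hk1, hk2⟩ := hk
      rw [map_add, map_one, hsa i k hiR ⟨by omega, by omega⟩ (by omega), sigma_self,
        sigma_other i k (by omega) (by omega)]
    have hsX2 : s (1 + c i) = 1 + c (i+1) := by
      rw [map_add, map_one, hsc i hiR, sigma_self]
    have hsX3 : s (((List.range' 1 n).filter fun k => decide (k ≠ i)).map
          fun k => 1 + b k i).prod
        = (((List.range' 1 n).filter fun k => decide (k ≠ i+1)).map
          fun k => 1 + b k (i+1)).prod := by
      have step1 : s (((List.range' 1 n).filter fun k => decide (k ≠ i)).map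
            fun k => 1 + b k i).prod
          = (((List.range' 1 n).filter fun k => decide (k ≠ i)).map
              fun k => (fun m => 1 + b m (i+1)) (sigma i k)).prod := by
        apply s_map_prod
        intro k hk
        rw [List.mem_filter, List.mem_range'_1] at hk
        obtain ⟨⟨hk1, hk2⟩, hk3⟩ := hk
        have hki : k ≠ i := by simpa using hk3
        show s (1 + b k i) = 1 + b (sigma i k) (i+1)
        rw [map_add, map_one, hsb k i ⟨by omega, by omega⟩ hiR hki, sigma_self]
      rw [step1, middle_prod n i hi1 hin (fun m => 1 + b m (i+1))]
    have hsX5 : s ((List.range' (i+1+1) (n-i-1)).reverse.map fun k => 1 + a i k).prod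
        = ((List.range' (i+1+1) (n-i-1)).reverse.map fun k => 1 + a (i+1) k).prod := by
      apply s_map_prod
      intro k hk
      rw [List.mem_reverse, List.mem_range'_1] at hk
      obtain ⟨hk1, hk2⟩ := hk
      rw [map_add, map_one, hsa i k hiR ⟨by omega, by omega⟩ (by omega), sigma_self,
        sigma_other i k (by omega) (by omega)]
    have hsP : s P = ((List.range' 1 (i-1)).reverse.map fun k => 1 + a (i+1) k).prod *
        (1 + c (i+1)) *
        (((List.range' 1 n).filter fun k => decide (k ≠ i+1)).map
          fun k => 1 + b k (i+1)).prod *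
        (1 + c (i+1)) *
        ((List.range' (i+1+1) (n-i-1)).reverse.map fun k => 1 + a (i+1) k).prod := by
      rw [hPdef]
      simp only [map_mul]
      rw [hsX1, hsX2, hsX3, hsX5]
    have hTi1 : ThetaB1 n a b c (i+1) = (1 + a (i+1) i) * s P := by
      rw [hsP]
      unfold ThetaB1
      rw [show i+1-1 = (i-1)+1 from by omega, List.range'_concat,
        show 1+1*(i-1) = i from by omega, show n - (i+1) = n-i-1 from by omega]
      simp only [List.reverse_append, List.reverse_cons, List.reverse_nil, List.nil_append,
        List.singleton_append, List.map_cons, List.prod_cons, List.map_append,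
        List.prod_append, List.map_nil, List.prod_nil, mul_one]
      simp only [mul_assoc]
    have hΔP : Δ P = 0 := by
      rw [hPdef]
      refine delta_mul_zero s Δ hL (delta_mul_zero s Δ hL (delta_mul_zero s Δ hL
        (delta_mul_zero s Δ hL ?_ (hzC i hiR)) ?_) (hzC i hiR)) ?_
      · apply delta_prod s Δ hL
        intro k hk
        rw [List.mem_reverse, List.mem_range'_1] at hk
        obtain ⟨hk1, hk2⟩ := hk
        exact hzA i k hiR ⟨by omega, by omega⟩ (by omega) (by omega) (by omega)
      · apply delta_prod s Δ hL
        intro k hk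
        rw [List.mem_filter, List.mem_range'_1] at hk
        obtain ⟨⟨hk1, hk2⟩, hk3⟩ := hk
        have hki : k ≠ i := by simpa using hk3
        exact hzB k i ⟨by omega, by omega⟩ hiR hki
      · apply delta_prod s Δ hL
        intro k hk
        rw [List.mem_reverse, List.mem_range'_1] at hk
        obtain ⟨hk1, hk2⟩ := hk
        exact hzA i k hiR ⟨by omega, by omega⟩ (by omega) (by omega) (by omega)
    have hΔsP : Δ (s P) = 0 := by
      rw [hsP]
      refine delta_mul_zero s Δ hL (delta_mul_zero s Δ hL (delta_mul_zero s Δ hL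
        (delta_mul_zero s Δ hL ?_ (hzC (i+1) hi1R)) ?_) (hzC (i+1) hi1R)) ?_
      · apply delta_prod s Δ hL
        intro k hk
        rw [List.mem_reverse, List.mem_range'_1] at hk
        obtain ⟨hk1, hk2⟩ := hk
        exact hzA (i+1) k hi1R ⟨by omega, by omega⟩ (by omega) (by omega) (by omega)
      · apply delta_prod s Δ hL
        intro k hk
        rw [List.mem_filter, List.mem_range'_1] at hk
        obtain ⟨⟨hk1, hk2⟩, hk3⟩ := hk
        have hki : k ≠ i + 1 := by simpa using hk3
        exact hzB k (i+1) ⟨by omega, by omega⟩ hi1R hki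
      · apply delta_prod s Δ hL
        intro k hk
        rw [List.mem_reverse, List.mem_range'_1] at hk
        obtain ⟨hk1, hk2⟩ := hk
        exact hzA (i+1) k hi1R ⟨by omega, by omega⟩ (by omega) (by omega) (by omega)
    have hΔu : Δ (1 + a i (i+1)) = 1 := by rw [hΔ1p, hΔ1]
    have hΔt : Δ (1 + a (i+1) i) = -1 := by
      rw [hΔ1p, rels.r0a (i+1) i hi1R hiR (by omega), map_neg, hΔ1]
    have main := parta_core s Δ hL P (1 + a i (i+1)) (1 + a (i+1) i)
      (ThetaB1 n a b c i) (ThetaB1 n a b c (i+1)) hTi hΔP hΔu hTi1 hΔt hΔsP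
    refine ⟨main.1, main.2, ?_⟩
    intro j hj hji hji1
    have hz : Δ (ThetaB1 n a b c j) = 0 := by
      refine delta_theta_zero n a b c j s Δ hL ?_ ?_ (hΔc j hj) hj.1 hj.2
      · intro k h1k hkn hkj
        exact hΔa j k hj ⟨h1k, hkn⟩ (by omega) (by omega) (by omega)
      · intro k h1k hkn hkj
        exact hΔb k j ⟨h1k, hkn⟩ hj (by omega)
    rw [hz, mul_zero]
  · intro sn Δn U hU hsab hsc1 hscn hL hΔcn hΔab hΔc
    have hn1 : inR n n := ⟨by omega, le_refl n⟩
    obtain ⟨m, hm⟩ : ∃ m, n = m + 1 := ⟨n-1, by omega⟩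
    have hmem : ∀ k ∈ List.range' 1 m, 1 ≤ k ∧ k ≤ n ∧ k ≠ n := by
      intro k hk; rw [List.mem_range'_1] at hk; omega
    have hrange : List.range' 1 n = List.range' 1 m ++ [n] := by
      rw [hm, List.range'_concat, show 1+1*m = m+1 from by omega]
    have hfilter : (List.range' 1 n).filter (fun k => decide (k ≠ n)) = List.range' 1 m := by
      have e1 : (List.range' 1 m).filter (fun k => decide (k ≠ n)) = List.range' 1 m :=
        List.filter_eq_self.mpr (by
          intro k hk
          rw [List.mem_range'_1] at hk
          simp only [decide_eq_true_eq]
          omega)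
      have e2 : ([n] : List ℕ).filter (fun k => decide (k ≠ n)) = [] := by simp
      rw [hrange, List.filter_append, e1, e2, List.append_nil]
    have hTn : ThetaB1 n a b c n =
        ((List.range' 1 m).reverse.map fun k => 1 + a n k).prod * (1 + c n) *
        ((List.range' 1 m).map fun k => 1 + b k n).prod * (1 + c n) := by
      unfold ThetaB1
      rw [hfilter, show n - 1 = m from by omega, Nat.sub_self,
        show List.range' (n+1) 0 = ([] : List ℕ) from rfl]
      simp only [List.reverse_nil, List.map_nil, List.prod_nil, mul_one]
    have hΔone := delta_one sn Δn hL
    have hΔ1p : ∀ x : A, Δn (1 + x) = Δn x := fun x => by rw [map_add, hΔone, zero_add]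
    have hP : Δn ((List.range' 1 m).reverse.map fun k => 1 + a n k).prod = 0 := by
      apply delta_prod sn Δn hL
      intro k hk
      rw [List.mem_reverse] at hk
      obtain ⟨h1, h2, h3⟩ := hmem k hk
      rw [hΔ1p, (hΔab n k hn1 ⟨h1, h2⟩ (by omega)).1]
    have hBz : Δn ((List.range' 1 m).map fun k => 1 + b k n).prod = 0 := by
      apply delta_prod sn Δn hL
      intro k hk
      obtain ⟨h1, h2, h3⟩ := hmem k hk
      rw [hΔ1p, (hΔab k n ⟨h1, h2⟩ hn1 h3).2]
    have hsP : sn ((List.range' 1 m).reverse.map fun k => 1 + a n k).prod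
        = ((List.range' 1 m).reverse.map fun k => 1 - b k n).prod := by
      apply s_map_prod
      intro k hk
      rw [List.mem_reverse] at hk
      obtain ⟨h1, h2, h3⟩ := hmem k hk
      rw [map_add, map_one, rels.r0a n k hn1 ⟨h1, h2⟩ (by omega), map_neg,
        (hsc1 k ⟨h1, h2⟩ h3).2.1, ← sub_eq_add_neg]
    have hsB : sn ((List.range' 1 m).map fun k => 1 + b k n).prod
        = ((List.range' 1 m).map fun k => 1 + a k n).prod := by
      apply s_map_prod
      intro k hk
      obtain ⟨h1, h2, h3⟩ := hmem k hk
      rw [map_add, map_one, (hsc1 k ⟨h1, h2⟩ h3).2.2]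
    have hBB : ((List.range' 1 m).reverse.map fun k => 1 - b k n).prod *
        ((List.range' 1 m).map fun k => 1 + b k n).prod = 1 := by
      apply revprod_mul_prod
      intro k hk
      obtain ⟨h1, h2, h3⟩ := hmem k hk
      exact one_sub_mul_one_add _ (rels.r1b k n ⟨h1, h2⟩ hn1 h3)
    have hBB2 : ((List.range' 1 m).map fun k => 1 + b k n).prod *
        ((List.range' 1 m).reverse.map fun k => 1 - b k n).prod = 1 := by
      apply prod_mul_revprod
      intro k hk
      obtain ⟨h1, h2, h3⟩ := hmem k hk
      exact one_add_mul_one_sub _ (rels.r1b k n ⟨h1, h2⟩ hn1 h3)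
    have hP1C : ((List.range' 1 m).reverse.map fun k => 1 + a n k).prod *
        ((List.range' 1 m).map fun k => 1 + a k n).prod = 1 := by
      have hP1' : ((List.range' 1 m).reverse.map fun k => 1 + a n k).prod
          = ((List.range' 1 m).reverse.map fun k => 1 - a k n).prod := by
        congr 1
        apply List.map_congr_left
        intro k hk
        rw [List.mem_reverse] at hk
        obtain ⟨h1, h2, h3⟩ := hmem k hk
        rw [rels.r0a n k hn1 ⟨h1, h2⟩ (by omega), ← sub_eq_add_neg]
      rw [hP1']
      apply revprod_mul_prod
      intro k hk
      obtain ⟨h1, h2, h3⟩ := hmem k hk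
      exact one_sub_mul_one_add _ (rels.r1a k n ⟨h1, h2⟩ hn1 h3)
    have hee := rels.r1c n hn1
    constructor
    · rw [hTn]
      exact partb_core sn Δn hL _ _ _ _ _ hP hBz hΔcn hsP hsB hscn hBB hBB2 hP1C hee U
        (by rw [hU, hTn])
    · intro j hj hjn
      have hz : Δn (ThetaB1 n a b c j) = 0 := by
        refine delta_theta_zero n a b c j sn Δn hL ?_ ?_ (hΔc j hj hjn) hj.1 hj.2
        · intro k h1k hkn hkj
          exact (hΔab j k hj ⟨h1k, hkn⟩ (by omega)).1
        · intro k h1k hkn hkj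
          exact (hΔab k j ⟨h1k, hkn⟩ hj (by omega)).2
      rw [hz, mul_zero]

end Stmt16
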